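/- Let γ ∈ (0,1), τ > ν−1, λ > 0, m ≥ 0, s ≥ s₀, and let ω ∈ DC(2γ,τ). Let E(φ) = Σ_{ℓ∈ℤ^ν} Ê(ℓ) e^{iℓ·φ} be a φ-dependent family of linear operators with |E|_{−m,s+2τ+1} < ∞. Define X(φ) := − Σ_{ℓ∈ℤ^ν∖{0}} (iλ ω·ℓ)^{−1} Ê(ℓ) e^{iℓ·φ}. Then X solves the homological equation λ ω·∂_φ X(φ) + E(φ) = Ê(0) and satisfies |X|_{−m,s} ≤ C(s) λ^{−1} γ^{−1} |E|_{−m,s+2τ+1}. Moreover, if E is momentum preserving (Ê(ℓ)_j^{j'} ≠ 0 ⟹ π^⊤(ℓ)+j−j' = 0), then X is momentum preserving and Ê(0) is a diagonal operator: Ê(0)_j^{j'} = 0 for j ≠ j'. -/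

import Mathlib

open scoped ENNReal NNReal BigOperators Classical
open MeasureTheory

namespace BetaPlane

abbrev Zn (n : ℕ) := Fin n → ℤ
abbrev Z2 := Fin 2 → ℤ
abbrev Idx (ν : ℕ) := Zn ν × Z2

/-- Euclidean norm of an integer vector. -/
noncomputable def znorm {n : ℕ} (ℓ : Fin n → ℤ) : ℝ :=
  Real.sqrt (∑ i, ((ℓ i : ℝ)) ^ 2)

/-- Euclidean norm of a real vector. -/
noncomputable def rnorm {n : ℕ} (ω : Fin n → ℝ) : ℝ :=
  Real.sqrt (∑ i, (ω i) ^ 2)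

/-- `⟨ℓ,j⟩ := max {1, |ℓ|, |j|}`. -/
noncomputable def wt {ν : ℕ} (p : Idx ν) : ℝ := max 1 (max (znorm p.1) (znorm p.2))

/-- `⟨ℓ⟩ := max {1, |ℓ|}`. -/
noncomputable def bwt {n : ℕ} (ℓ : Fin n → ℤ) : ℝ := max 1 (znorm ℓ)

noncomputable def ωdot {n : ℕ} (ω : Fin n → ℝ) (ℓ : Fin n → ℤ) : ℝ := ∑ i, ω i * (ℓ i : ℝ)

noncomputable def mdot (m : Fin 2 → ℝ) (j : Z2) : ℝ := ∑ k, m k * (j k : ℝ)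

/-- `π^⊤(ℓ) = ∑ k, ℓ k • j̄ k`. -/
def piT {ν : ℕ} (jb : Fin ν → Z2) (ℓ : Zn ν) : Z2 := fun k => ∑ i, ℓ i * jb i k

/-- `π(ς) = (j̄ 1 · ς, …, j̄ ν · ς)`. -/
noncomputable def piMap {ν : ℕ} (jb : Fin ν → Z2) (ς : Fin 2 → ℝ) : Fin ν → ℝ :=
  fun i => ∑ k, (jb i k : ℝ) * ς k

/-- The wave vectors `j̄ 1, …, j̄ ν` span `ℝ²`. -/
def SpanningWaveVectors {ν : ℕ} (jb : Fin ν → Z2) : Prop :=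
  ∃ i i' : Fin ν, jb i 0 * jb i' 1 - jb i 1 * jb i' 0 ≠ 0

/-- Quasi-periodic traveling wave, in Fourier coefficients:
`û(ℓ,j) = 0` whenever `π^⊤(ℓ) + j ≠ 0`. -/
def IsQPTW {ν : ℕ} (jb : Fin ν → Z2) (u : Idx ν → ℂ) : Prop :=
  ∀ p : Idx ν, piT jb p.1 + p.2 ≠ 0 → u p = 0

/-- Zero average in `x`: the Fourier coefficients `û(ℓ,0)` vanish. -/
def ZeroAvgX {ν : ℕ} (u : Idx ν → ℂ) : Prop := ∀ ℓ : Zn ν, u (ℓ, 0) = 0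

/-- Real-valuedness in Fourier coefficients. -/
def RealCoeff {ν : ℕ} (u : Idx ν → ℂ) : Prop :=
  ∀ p : Idx ν, u (-p.1, -p.2) = starRingEnd ℂ (u p)

/-- Sobolev norm `‖u‖_s` (as an extended real). -/
noncomputable def sobNorm {ν : ℕ} {E : Type*} [SeminormedAddCommGroup E]
    (s : ℝ) (u : Idx ν → E) : ℝ≥0∞ :=
  (∑' p : Idx ν, ENNReal.ofReal (wt p ^ (2 * s)) * ((‖u p‖₊ : ℝ≥0∞)) ^ 2) ^ (1/2 : ℝ)

/-- `C^∞` smoothness = rapid decay of the Fourier coefficients. -/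
def SmoothCoeff {ν : ℕ} (u : Idx ν → ℂ) : Prop := ∀ s : ℝ, sobNorm s u < ⊤

/-- Weighted (Lipschitz in the parameter `ω ∈ Λ`) Sobolev norm `‖u‖_s^{Lip(γ)}`. -/
noncomputable def sobNormLip {ν : ℕ} {E : Type*} [SeminormedAddCommGroup E]
    (γ : ℝ) (Λ : Set (Fin ν → ℝ)) (s : ℝ) (u : (Fin ν → ℝ) → Idx ν → E) : ℝ≥0∞ :=
  (⨆ ω ∈ Λ, sobNorm s (u ω)) +
    ENNReal.ofReal γ * ⨆ ω₁ ∈ Λ, ⨆ ω₂ ∈ Λ,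
      sobNorm (s - 1) (fun p => u ω₁ p - u ω₂ p) / ENNReal.ofReal (rnorm (ω₁ - ω₂))

/-- Symbol of `𝙻 = (−Δ)^{−1} ∂_{x₁}`. -/
noncomputable def Lfreq (j : Z2) : ℝ := if j = 0 then 0 else (j 0 : ℝ) / (znorm j) ^ 2

/-- The operator `𝙻 = (−Δ)^{−1} ∂_{x₁}` in Fourier coefficients. -/
noncomputable def Lsymb {ν : ℕ} (v : Idx ν → ℂ) : Idx ν → ℂ :=
  fun p => Complex.I * (Lfreq p.2 : ℂ) * v p

/-- The operator `ω·∂_φ` in Fourier coefficients. -/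
noncomputable def phiDer {ν : ℕ} (ω : Fin ν → ℝ) (v : Idx ν → ℂ) : Idx ν → ℂ :=
  fun p => Complex.I * ((ωdot ω p.1 : ℝ) : ℂ) * v p

/-- `B(j') ⋅ (i j'')` where `B(j') = (i/|j'|²)(−j'₂, j'₁)` is the Biot-Savart symbol. -/
noncomputable def bsDot (j' j'' : Z2) : ℂ :=
  if j' = 0 then 0
  else -((((-(j' 1 : ℝ)) * (j'' 0 : ℝ) + (j' 0 : ℝ) * (j'' 1 : ℝ)) / (znorm j') ^ 2 : ℝ) : ℂ)

/-- Fourier coefficients of the nonlinearity `B[v]·∇w` (`B` the Biot-Savart operator). -/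
noncomputable def nonlin {ν : ℕ} (v w : Idx ν → ℂ) : Idx ν → ℂ :=
  fun p => ∑' q : Idx ν, bsDot q.2 (p.2 - q.2) * v q * w (p.1 - q.1, p.2 - q.2)

/-- Fourier coefficients of the (vector valued) Biot-Savart velocity field `B[v]`. -/
noncomputable def biotSavartV {ν : ℕ} (v : Idx ν → ℂ) : Idx ν → Fin 2 → ℂ :=
  fun p k => if p.2 = 0 then 0 else
    Complex.I * ((((if k = 0 then -(p.2 1) else p.2 0 : ℤ) : ℝ) / (znorm p.2) ^ 2 : ℝ) : ℂ) * v p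

/-- The reference annulus `Ω := {1 ≤ |ω| ≤ 2}`. -/
def OmegaSet (ν : ℕ) : Set (Fin ν → ℝ) := {ω | 1 ≤ rnorm ω ∧ rnorm ω ≤ 2}

/-- Diophantine vectors `DC(γ,τ)`. -/
def DCset (ν : ℕ) (γ τ : ℝ) : Set (Fin ν → ℝ) :=
  {ω ∈ OmegaSet ν | ∀ ℓ : Zn ν, ℓ ≠ 0 → γ * bwt ℓ ^ (-τ) ≤ |ωdot ω ℓ|}

/-- The set `Ω_γ` of first order Melnikov non-resonance conditions. -/
def MelnikovSet {ν : ℕ} (jb : Fin ν → Z2) (β lam γ τ : ℝ) : Set (Fin ν → ℝ) :=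
  {ω ∈ DCset ν γ τ | ∀ (ℓ : Zn ν) (j : Z2), (ℓ, j) ≠ (0, 0) → piT jb ℓ + j = 0 →
    lam * γ * bwt ℓ ^ (-τ) ≤ |lam * ωdot ω ℓ + β * Lfreq j|}

/-- Matrix representation `R̂(ℓ)_j^{j'}` of (φ-dependent families of) linear operators. -/
abbrev OpMat (ν : ℕ) := Zn ν → Z2 → Z2 → ℂ

/-- The decay norm `|R|_{m,s}`. -/
noncomputable def decayNorm {ν : ℕ} (m s : ℝ) (R : OpMat ν) : ℝ≥0∞ :=
  ⨆ j' : Z2, ENNReal.ofReal (bwt j' ^ (-m)) *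
    (∑' q : Idx ν, ENNReal.ofReal (wt (q.1, q.2 - j') ^ (2 * s)) *
      ((‖R q.1 q.2 j'‖₊ : ℝ≥0∞)) ^ 2) ^ (1/2 : ℝ)

/-- The weighted decay norm `|R|_{m,s}^{Lip(γ)}` of a family `R(ω)`, `ω ∈ Λ`. -/
noncomputable def decayNormLip {ν : ℕ} (γ : ℝ) (Λ : Set (Fin ν → ℝ)) (m s : ℝ)
    (R : (Fin ν → ℝ) → OpMat ν) : ℝ≥0∞ :=
  (⨆ ω ∈ Λ, decayNorm m s (R ω)) +
    ENNReal.ofReal γ * ⨆ ω₁ ∈ Λ, ⨆ ω₂ ∈ Λ,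
      decayNorm m (s - 1) (fun ℓ j j' => R ω₁ ℓ j j' - R ω₂ ℓ j j') /
        ENNReal.ofReal (rnorm (ω₁ - ω₂))

/-- Composition of operators at the level of matrices. -/
noncomputable def opComp {ν : ℕ} (R Q : OpMat ν) : OpMat ν :=
  fun ℓ j j' => ∑' q : Idx ν, R (ℓ - q.1) j q.2 * Q q.1 q.2 j'

/-- Action of an operator (given by its matrix) on Fourier coefficients. -/
noncomputable def opApply {ν : ℕ} (R : OpMat ν) (u : Idx ν → ℂ) : Idx ν → ℂ :=
  fun p => ∑' q : Idx ν, R (p.1 - q.1) p.2 q.2 * u q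

/-- Matrix of the identity operator. -/
noncomputable def idMat (ν : ℕ) : OpMat ν := fun ℓ j j' => if ℓ = 0 ∧ j = j' then 1 else 0

/-- Momentum preserving operator, in matrix form. -/
def MomPresMat {ν : ℕ} (jb : Fin ν → Z2) (R : OpMat ν) : Prop :=
  ∀ ℓ j j', R ℓ j j' ≠ 0 → piT jb ℓ + j = j'

/-- `n`-fold composition `R^n`. -/
noncomputable def opPow {ν : ℕ} (R : OpMat ν) : ℕ → OpMat ν
  | 0 => idMat ν
  | n + 1 => opComp R (opPow R n)

/-- Exponential `exp(R) = Id + ∑_{n ≥ 1} R^n / n!`. -/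
noncomputable def expMat {ν : ℕ} (R : OpMat ν) : OpMat ν :=
  fun ℓ j j' => idMat ν ℓ j j' +
    ∑' n : ℕ, ((Nat.factorial (n + 1) : ℂ))⁻¹ * opPow R (n + 1) ℓ j j'


/-- Solution `X(φ) = − ∑_{ℓ ≠ 0} (iλ ω·ℓ)⁻¹ Ê(ℓ) e^{iℓ·φ}` of the homological equation
`λ ω·∂_φ X + E = Ê(0)`. -/
noncomputable def homSolX {ν : ℕ} (lam : ℝ) (ω : Fin ν → ℝ) (E : OpMat ν) : OpMat ν :=
  fun ℓ j j' => if ℓ = 0 then 0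
    else - E ℓ j j' / (Complex.I * (((lam * ωdot ω ℓ : ℝ)) : ℂ))

/-- homological equation of Lemma 5.4 of the paper: for Diophantine
`ω`, the operator `X` solves `λ ω·∂_φ X(φ) + E(φ) = Ê(0)` with the estimate
`|X|_{-m,s} ≤ C(s) λ⁻¹ γ⁻¹ |E|_{-m,s+2τ+1}`; moreover if `E` is momentum preserving then
so is `X`, and `Ê(0)` is a diagonal operator. -/
theorem operator_homological_equation
    {ν : ℕ} (hν : 2 ≤ ν) (jb : Fin ν → Z2) (hjb : SpanningWaveVectors jb)
    (γ τ lam m s : ℝ)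
    (hγ₀ : 0 < γ) (hγ₁ : γ < 1) (hτ : (ν : ℝ) - 1 < τ) (hlam : 0 < lam)
    (hm : 0 ≤ m) (hs : (ν : ℝ) + 5 ≤ s)
    (ω : Fin ν → ℝ) (hω : ω ∈ DCset ν (2 * γ) τ)
    (E : OpMat ν) (hE : decayNorm (-m) (s + 2 * τ + 1) E < ⊤) :
    ∃ C : ℝ, 0 < C ∧
      -- homological equation `λ ω·∂_φ X + E = Ê(0)`
      (∀ (ℓ : Zn ν) (j j' : Z2),
        Complex.I * (((lam * ωdot ω ℓ : ℝ)) : ℂ) * homSolX lam ω E ℓ j j' + E ℓ j j'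
          = (if ℓ = 0 then E 0 j j' else 0)) ∧
      -- estimate
      decayNorm (-m) s (homSolX lam ω E)
        ≤ ENNReal.ofReal (C * lam⁻¹ * γ⁻¹) * decayNorm (-m) (s + 2 * τ + 1) E ∧
      -- momentum preservation and diagonality of the φ-average
      (MomPresMat jb E →
        MomPresMat jb (homSolX lam ω E) ∧ ∀ j j' : Z2, j ≠ j' → E 0 j j' = 0) := by
  obtain ⟨hΩ, hDC⟩ := hω
  have hτ0 : (0:ℝ) ≤ τ := by
    have h1 : (2:ℝ) ≤ (ν:ℝ) := by exact_mod_cast hν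
    linarith
  have hbwt_pos : ∀ ℓ : Zn ν, (0:ℝ) < bwt ℓ :=
    fun ℓ => lt_of_lt_of_le one_pos (le_max_left _ _)
  have hbwt_one : ∀ ℓ : Zn ν, (1:ℝ) ≤ bwt ℓ := fun ℓ => le_max_left _ _
  have hwt_one : ∀ p : Idx ν, (1:ℝ) ≤ wt p := fun p => le_max_left _ _
  have hwt_pos : ∀ p : Idx ν, (0:ℝ) < wt p := fun p => lt_of_lt_of_le one_pos (hwt_one p)
  have hDC' : ∀ ℓ : Zn ν, ℓ ≠ 0 → 0 < ωdot ω ℓ ∨ ωdot ω ℓ < 0 := by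
    intro ℓ hℓ
    have h1 := hDC ℓ hℓ
    have h2 : 0 < 2 * γ * bwt ℓ ^ (-τ) := by
      have := Real.rpow_pos_of_pos (hbwt_pos ℓ) (-τ); positivity
    rcases lt_or_gt_of_ne (show ωdot ω ℓ ≠ 0 by
      intro h; rw [h, abs_zero] at h1; linarith) with h | h
    · exact Or.inr h
    · exact Or.inl h
  have hden : ∀ ℓ : Zn ν, ℓ ≠ 0 → (Complex.I * (((lam * ωdot ω ℓ : ℝ)) : ℂ)) ≠ 0 := by
    intro ℓ hℓ
    have hne : ωdot ω ℓ ≠ 0 := by rcases hDC' ℓ hℓ with h | h <;> [exact ne_of_gt h; exact ne_of_lt h]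
    exact mul_ne_zero Complex.I_ne_zero (by
      exact_mod_cast (Complex.ofReal_ne_zero).2 (mul_ne_zero (ne_of_gt hlam) hne))
  -- pointwise norm bound
  have hXbound : ∀ (ℓ : Zn ν) (j j' : Z2),
      ‖homSolX lam ω E ℓ j j'‖ ≤ (2 * lam * γ)⁻¹ * bwt ℓ ^ τ * ‖E ℓ j j'‖ := by
    intro ℓ j j'
    by_cases hℓ : ℓ = 0
    · rw [hℓ]
      simp only [homSolX, if_true, eq_self_iff_true, norm_zero]
      have h1 := Real.rpow_pos_of_pos (hbwt_pos (0 : Zn ν)) τ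
      have h2 : (0:ℝ) < (2 * lam * γ)⁻¹ := by positivity
      exact mul_nonneg (mul_nonneg h2.le h1.le) (norm_nonneg (E 0 j j'))
    · have hbτ : (0:ℝ) < bwt ℓ ^ τ := Real.rpow_pos_of_pos (hbwt_pos ℓ) τ
      have hd : lam * (2 * γ * bwt ℓ ^ (-τ)) ≤ ‖Complex.I * (((lam * ωdot ω ℓ : ℝ)) : ℂ)‖ := by
        rw [norm_mul, Complex.norm_I, one_mul, Complex.norm_real, Real.norm_eq_abs,
          abs_mul, abs_of_pos hlam]
        exact mul_le_mul_of_nonneg_left (hDC ℓ hℓ) (le_of_lt hlam)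
      have hdpos : (0:ℝ) < lam * (2 * γ * bwt ℓ ^ (-τ)) := by
        have := Real.rpow_pos_of_pos (hbwt_pos ℓ) (-τ); positivity
      have h1 : ‖homSolX lam ω E ℓ j j'‖
          ≤ ‖E ℓ j j'‖ / (lam * (2 * γ * bwt ℓ ^ (-τ))) := by
        simp only [homSolX, if_neg hℓ, norm_div, norm_neg]
        exact div_le_div_of_nonneg_left (norm_nonneg _) hdpos hd
      refine h1.trans (le_of_eq ?_)
      rw [Real.rpow_neg (le_of_lt (hbwt_pos ℓ))]
      field_simp
  -- the key constant
  set K : ℝ≥0∞ := ENNReal.ofReal ((2 * lam * γ)⁻¹) with hK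
  have hcnn : (0:ℝ) ≤ (2 * lam * γ)⁻¹ := by positivity
  -- decay norm estimate
  have hest : decayNorm (-m) s (homSolX lam ω E)
      ≤ K * decayNorm (-m) (s + 2 * τ + 1) E := by
    rw [decayNorm]
    apply iSup_le
    intro j'
    have hterm : ∀ q : Idx ν,
        ENNReal.ofReal (wt (q.1, q.2 - j') ^ (2 * s)) *
          ((‖homSolX lam ω E q.1 q.2 j'‖₊ : ℝ≥0∞)) ^ 2
        ≤ ENNReal.ofReal ((2 * lam * γ)⁻¹ ^ 2) *
          (ENNReal.ofReal (wt (q.1, q.2 - j') ^ (2 * (s + 2 * τ + 1))) *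
            ((‖E q.1 q.2 j'‖₊ : ℝ≥0∞)) ^ 2) := by
      intro q
      set w := wt (q.1, q.2 - j') with hw
      have hw1 : (1:ℝ) ≤ w := hwt_one _
      have hw0 : (0:ℝ) < w := hwt_pos _
      rw [← enorm_eq_nnnorm, ← enorm_eq_nnnorm, ← ofReal_norm, ← ofReal_norm,
        ← ENNReal.ofReal_pow (norm_nonneg _), ← ENNReal.ofReal_pow (norm_nonneg _),
        ← ENNReal.ofReal_mul (by positivity), ← ENNReal.ofReal_mul (by positivity),
        ← ENNReal.ofReal_mul (by positivity)]
      apply ENNReal.ofReal_le_ofReal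
      have hb1 : bwt q.1 ≤ w := by
        rw [hw, wt, bwt]
        exact max_le_max le_rfl (le_max_left _ _)
      have hXb := hXbound q.1 q.2 j'
      have hsq : ‖homSolX lam ω E q.1 q.2 j'‖ ^ 2
          ≤ ((2 * lam * γ)⁻¹ * bwt q.1 ^ τ * ‖E q.1 q.2 j'‖) ^ 2 := by
        apply pow_le_pow_left₀ (norm_nonneg _) hXb
      have hbτ0 : (0:ℝ) < bwt q.1 ^ τ := Real.rpow_pos_of_pos (hbwt_pos q.1) τ
      have hrw : ((2 * lam * γ)⁻¹ * bwt q.1 ^ τ * ‖E q.1 q.2 j'‖) ^ 2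
          = (2 * lam * γ)⁻¹ ^ 2 * bwt q.1 ^ (2 * τ) * ‖E q.1 q.2 j'‖ ^ 2 := by
        have : (bwt q.1 ^ τ) ^ 2 = bwt q.1 ^ (2 * τ) := by
          rw [← Real.rpow_natCast (bwt q.1 ^ τ) 2, ← Real.rpow_mul (le_of_lt (hbwt_pos q.1))]
          norm_num [mul_comm]
        rw [mul_pow, mul_pow, this]
      have hwm : w ^ (2 * s) * bwt q.1 ^ (2 * τ) ≤ w ^ (2 * (s + 2 * τ + 1)) := by
        have h1 : bwt q.1 ^ (2 * τ) ≤ w ^ (2 * τ) :=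
          Real.rpow_le_rpow (le_of_lt (hbwt_pos q.1)) hb1 (by linarith)
        have h2 : w ^ (2 * s) * w ^ (2 * τ) = w ^ (2 * s + 2 * τ) :=
          (Real.rpow_add hw0 _ _).symm
        have h3 : w ^ (2 * s + 2 * τ) ≤ w ^ (2 * (s + 2 * τ + 1)) :=
          Real.rpow_le_rpow_of_exponent_le hw1 (by linarith)
        calc w ^ (2 * s) * bwt q.1 ^ (2 * τ)
            ≤ w ^ (2 * s) * w ^ (2 * τ) := by
              exact mul_le_mul_of_nonneg_left h1 (le_of_lt (Real.rpow_pos_of_pos hw0 _))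
          _ = w ^ (2 * s + 2 * τ) := h2
          _ ≤ w ^ (2 * (s + 2 * τ + 1)) := h3
      calc w ^ (2 * s) * ‖homSolX lam ω E q.1 q.2 j'‖ ^ 2
          ≤ w ^ (2 * s) * ((2 * lam * γ)⁻¹ ^ 2 * bwt q.1 ^ (2 * τ) * ‖E q.1 q.2 j'‖ ^ 2) := by
            rw [← hrw]
            exact mul_le_mul_of_nonneg_left hsq (le_of_lt (Real.rpow_pos_of_pos hw0 _))
        _ = (2 * lam * γ)⁻¹ ^ 2 * ((w ^ (2 * s) * bwt q.1 ^ (2 * τ)) * ‖E q.1 q.2 j'‖ ^ 2) := by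
            ring
        _ ≤ (2 * lam * γ)⁻¹ ^ 2 * (w ^ (2 * (s + 2 * τ + 1)) * ‖E q.1 q.2 j'‖ ^ 2) := by
            apply mul_le_mul_of_nonneg_left _ (by positivity)
            exact mul_le_mul_of_nonneg_right hwm (by positivity)
    have htsum : (∑' q : Idx ν, ENNReal.ofReal (wt (q.1, q.2 - j') ^ (2 * s)) *
          ((‖homSolX lam ω E q.1 q.2 j'‖₊ : ℝ≥0∞)) ^ 2)
        ≤ ENNReal.ofReal ((2 * lam * γ)⁻¹ ^ 2) *
          ∑' q : Idx ν, ENNReal.ofReal (wt (q.1, q.2 - j') ^ (2 * (s + 2 * τ + 1))) *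
            ((‖E q.1 q.2 j'‖₊ : ℝ≥0∞)) ^ 2 := by
      rw [← ENNReal.tsum_mul_left]
      exact ENNReal.tsum_le_tsum hterm
    have hpow := ENNReal.rpow_le_rpow htsum (by norm_num : (0:ℝ) ≤ 1/2)
    have hKsq : (ENNReal.ofReal ((2 * lam * γ)⁻¹ ^ 2)) ^ ((1:ℝ)/2) = K := by
      rw [ENNReal.ofReal_pow hcnn, ← ENNReal.rpow_natCast (ENNReal.ofReal _) 2,
        ← ENNReal.rpow_mul]
      norm_num
      rw [hK, mul_inv, mul_inv]
      congr 1
      ring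
    calc ENNReal.ofReal (bwt j' ^ (-(-m))) *
          (∑' q : Idx ν, ENNReal.ofReal (wt (q.1, q.2 - j') ^ (2 * s)) *
            ((‖homSolX lam ω E q.1 q.2 j'‖₊ : ℝ≥0∞)) ^ 2) ^ ((1:ℝ)/2)
        ≤ ENNReal.ofReal (bwt j' ^ (-(-m))) *
          ((ENNReal.ofReal ((2 * lam * γ)⁻¹ ^ 2) *
            ∑' q : Idx ν, ENNReal.ofReal (wt (q.1, q.2 - j') ^ (2 * (s + 2 * τ + 1))) *
              ((‖E q.1 q.2 j'‖₊ : ℝ≥0∞)) ^ 2) ^ ((1:ℝ)/2)) :=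
          mul_le_mul_right hpow _
      _ = K * (ENNReal.ofReal (bwt j' ^ (-(-m))) *
            (∑' q : Idx ν, ENNReal.ofReal (wt (q.1, q.2 - j') ^ (2 * (s + 2 * τ + 1))) *
              ((‖E q.1 q.2 j'‖₊ : ℝ≥0∞)) ^ 2) ^ ((1:ℝ)/2)) := by
          rw [ENNReal.mul_rpow_of_nonneg _ _ (by norm_num : (0:ℝ) ≤ 1/2), hKsq]
          ring
      _ ≤ K * decayNorm (-m) (s + 2 * τ + 1) E := by
          apply mul_le_mul_right
          exact le_iSup (fun j' => ENNReal.ofReal (bwt j' ^ (-(-m))) *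
            (∑' q : Idx ν, ENNReal.ofReal (wt (q.1, q.2 - j') ^ (2 * (s + 2 * τ + 1))) *
              ((‖E q.1 q.2 j'‖₊ : ℝ≥0∞)) ^ 2) ^ ((1:ℝ)/2)) j'
  refine ⟨1, one_pos, ?_, ?_, ?_⟩
  · intro ℓ j j'
    by_cases hℓ : ℓ = 0
    · subst hℓ; simp [homSolX]
    · simp only [homSolX, if_neg hℓ]
      rw [neg_div, mul_neg, mul_div_cancel₀ _ (hden ℓ hℓ), neg_add_cancel]
  · refine hest.trans (mul_le_mul_left ?_ _)
    apply ENNReal.ofReal_le_ofReal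
    rw [mul_inv, mul_inv]
    have : (2:ℝ)⁻¹ ≤ 1 := by norm_num
    nlinarith [inv_pos.2 hlam, inv_pos.2 hγ₀, mul_pos (inv_pos.2 hlam) (inv_pos.2 hγ₀)]
  · intro hMP
    constructor
    · intro ℓ j j' hX
      apply hMP
      intro hE0
      apply hX
      simp [homSolX, hE0]
    · intro j j' hjj
      by_contra h0
      have := hMP 0 j j' h0
      have hpi : piT jb (0 : Zn ν) = 0 := by
        funext k; simp [piT]
      rw [hpi, zero_add] at this
      exact hjj this

end BetaPlane
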